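/- Let L/K be a totally ramified Galois extension of degree p of complete discrete valued fields of characteristic p, with ramification break s, let λ ∈ L be a root of X^p − X − f where f ∈ K satisfies v_K(f) = −s with s coprime to p, and let σ be a generator of Gal(L/K). Then (σ−1)O_L = { σ(x) − x : x ∈ O_L } equals { Σ_{i=0}^{p−2} a_i λ^i : a_i ∈ K with v_K(a_i) ≥ (i+1)s/p for all i }. -/

import Mathlib

/-!
Common background: complete discretely valued fields, their valuation rings,
residue fields, Galois action on the valuation ring, truncated Witt vector
functoriality, and ramification breaks.
-/

noncomputable section

open scoped Classical

/-- A field equipped with a normalized (i.e. surjective onto `ℤ`) discrete additive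
valuation `v : K → WithTop ℤ` with respect to which it is complete. -/
structure CompleteDiscreteValuation (K : Type*) [Field K] where
  v : K → WithTop ℤ
  eq_top_iff : ∀ x : K, v x = ⊤ ↔ x = 0
  map_one : v 1 = 0
  map_mul : ∀ x y : K, v (x * y) = v x + v y
  min_le_add : ∀ x y : K, min (v x) (v y) ≤ v (x + y)
  surjective : ∀ n : ℤ, ∃ x : K, v x = (n : WithTop ℤ)
  complete : ∀ x : ℕ → K,
      (∀ n : ℕ, ((n : ℤ) : WithTop ℤ) ≤ v (x (n + 1) - x n)) →
      ∃ y : K, ∀ n : ℕ, ((n : ℤ) : WithTop ℤ) ≤ v (y - x n)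

namespace TruncatedWittVector

variable {p n : ℕ} [hp : Fact p.Prime] {R S : Type*} [CommRing R] [CommRing S]

lemma truncateFun_congr_map (f : R →+* S) (a b : WittVector p R)
    (h : WittVector.truncateFun n a = WittVector.truncateFun n b) :
    WittVector.truncateFun n (WittVector.map f a) =
      WittVector.truncateFun n (WittVector.map f b) := by
  ext i
  have hc := congrArg (fun z => TruncatedWittVector.coeff i z) h
  simp only [WittVector.coeff_truncateFun] at hc ⊢
  rw [WittVector.map_coeff, WittVector.map_coeff, hc]

/-- Functoriality of truncated Witt vectors: the ring homomorphism
`W_n(R) → W_n(S)` induced by `f : R → S`, acting componentwise. -/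
def map (f : R →+* S) : TruncatedWittVector p n R →+* TruncatedWittVector p n S where
  toFun x := WittVector.truncateFun n (WittVector.map f x.out)
  map_one' := by
    show WittVector.truncateFun n (WittVector.map f (1 : TruncatedWittVector p n R).out) = 1
    have h : WittVector.truncateFun n ((1 : TruncatedWittVector p n R)).out =
        WittVector.truncateFun n (1 : WittVector p R) := by
      rw [truncateFun_out, WittVector.truncateFun_one]
    have := truncateFun_congr_map f _ _ h
    rw [this, map_one, WittVector.truncateFun_one]
  map_mul' x y := by
    show WittVector.truncateFun n (WittVector.map f (x * y).out) =
      WittVector.truncateFun n (WittVector.map f x.out) *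
        WittVector.truncateFun n (WittVector.map f y.out)
    have h : WittVector.truncateFun n (x * y).out =
        WittVector.truncateFun n (x.out * y.out) := by
      rw [truncateFun_out, WittVector.truncateFun_mul, truncateFun_out, truncateFun_out]
    have := truncateFun_congr_map f _ _ h
    rw [this, map_mul, WittVector.truncateFun_mul]
  map_zero' := by
    show WittVector.truncateFun n (WittVector.map f (0 : TruncatedWittVector p n R).out) = 0
    have h : WittVector.truncateFun n ((0 : TruncatedWittVector p n R)).out =
        WittVector.truncateFun n (0 : WittVector p R) := by
      rw [truncateFun_out, WittVector.truncateFun_zero]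
    have := truncateFun_congr_map f _ _ h
    rw [this, map_zero, WittVector.truncateFun_zero]
  map_add' x y := by
    show WittVector.truncateFun n (WittVector.map f (x + y).out) =
      WittVector.truncateFun n (WittVector.map f x.out) +
        WittVector.truncateFun n (WittVector.map f y.out)
    have h : WittVector.truncateFun n (x + y).out =
        WittVector.truncateFun n (x.out + y.out) := by
      rw [truncateFun_out, WittVector.truncateFun_add, truncateFun_out, truncateFun_out]
    have := truncateFun_congr_map f _ _ h
    rw [this, map_add, WittVector.truncateFun_add]

@[simp]
lemma map_coeff (f : R →+* S) (x : TruncatedWittVector p n R) (i : Fin n) :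
    (map f x).coeff i = f (x.coeff i) := by
  show (WittVector.truncateFun n (WittVector.map f x.out)).coeff i = f (x.coeff i)
  rw [WittVector.coeff_truncateFun, WittVector.map_coeff, coeff_out]

end TruncatedWittVector

namespace CompleteDiscreteValuation

variable {K : Type*} [Field K]

lemma v_zero (w : CompleteDiscreteValuation K) : w.v 0 = ⊤ := (w.eq_top_iff 0).2 rfl

lemma v_neg_one (w : CompleteDiscreteValuation K) : w.v (-1) = 0 := by
  have h := w.map_mul (-1) (-1)
  rw [neg_mul_neg, one_mul, w.map_one] at h
  cases h' : w.v (-1) with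
  | top =>
      exact absurd ((w.eq_top_iff (-1)).1 h') (by norm_num)
  | coe a =>
      rw [h'] at h
      have ha : a + a = 0 := by exact_mod_cast h.symm
      have : a = 0 := by omega
      rw [this]
      rfl

lemma v_neg (w : CompleteDiscreteValuation K) (x : K) : w.v (-x) = w.v x := by
  rw [show -x = -1 * x by ring, w.map_mul, w.v_neg_one, zero_add]

/-- The valuation ring (ring of integers) of a complete discretely valued field. -/
def integers (w : CompleteDiscreteValuation K) : Subring K where
  carrier := {x : K | 0 ≤ w.v x}
  zero_mem' := by simp [Set.mem_setOf_eq, v_zero]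
  one_mem' := by simp [Set.mem_setOf_eq, w.map_one]
  add_mem' {a b} ha hb := le_trans (le_min ha hb) (w.min_le_add a b)
  mul_mem' {a b} ha hb := by
    simp only [Set.mem_setOf_eq] at *
    rw [w.map_mul]
    exact add_nonneg ha hb
  neg_mem' {a} ha := by
    simp only [Set.mem_setOf_eq] at *
    rwa [w.v_neg]

lemma mem_integers_iff (w : CompleteDiscreteValuation K) (x : K) :
    x ∈ w.integers ↔ 0 ≤ w.v x := Iff.rfl

/-- The maximal ideal of the valuation ring. -/
def maxIdeal (w : CompleteDiscreteValuation K) : Ideal w.integers where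
  carrier := {x | 0 < w.v (x : K)}
  zero_mem' := by simp [Set.mem_setOf_eq, v_zero]
  add_mem' {a b} ha hb := lt_of_lt_of_le (lt_min ha hb) (w.min_le_add (a : K) (b : K))
  smul_mem' c x hx := by
    simp only [Set.mem_setOf_eq] at *
    show 0 < w.v ((c : K) * (x : K))
    rw [w.map_mul]
    exact lt_of_lt_of_le hx (le_add_of_nonneg_left c.2)

/-- The residue field of a complete discretely valued field. -/
abbrev residueField (w : CompleteDiscreteValuation K) := w.integers ⧸ w.maxIdeal

section Extension

variable {L : Type*} [Field L] [Algebra K L]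

/-- The ring homomorphism between valuation rings induced by the inclusion `K ⟶ L`,
when the valuation of `L` restricts to `e` times the valuation of `K`. -/
def integerMap (wK : CompleteDiscreteValuation K) (wL : CompleteDiscreteValuation L)
    (e : ℕ) (hcomp : ∀ x : K, wL.v (algebraMap K L x) = e • wK.v x) :
    wK.integers →+* wL.integers where
  toFun x := ⟨algebraMap K L x, by
    rw [mem_integers_iff, hcomp]
    exact nsmul_nonneg x.2 e⟩
  map_one' := Subtype.ext (by simp)
  map_mul' x y := Subtype.ext (by simp)
  map_zero' := Subtype.ext (by simp)
  map_add' x y := Subtype.ext (by simp)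

/-- The induced homomorphism between the residue fields. -/
def residueMap (wK : CompleteDiscreteValuation K) (wL : CompleteDiscreteValuation L)
    (e : ℕ) (he : 0 < e) (hcomp : ∀ x : K, wL.v (algebraMap K L x) = e • wK.v x) :
    wK.residueField →+* wL.residueField :=
  Ideal.Quotient.lift wK.maxIdeal
    ((Ideal.Quotient.mk wL.maxIdeal).comp (integerMap wK wL e hcomp))
    (by
      intro a ha
      rw [RingHom.comp_apply, Ideal.Quotient.eq_zero_iff_mem]
      show 0 < wL.v (algebraMap K L (a : K))
      rw [hcomp]
      calc (0 : WithTop ℤ) < wK.v (a : K) := ha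
        _ = 1 • wK.v (a : K) := (one_nsmul _).symm
        _ ≤ e • wK.v (a : K) := nsmul_le_nsmul_left (le_of_lt ha) he)

/-- The induced extension of residue fields `k_L / k_K` is separable. -/
def ResidueSeparable (wK : CompleteDiscreteValuation K) (wL : CompleteDiscreteValuation L)
    (e : ℕ) (he : 0 < e) (hcomp : ∀ x : K, wL.v (algebraMap K L x) = e • wK.v x) : Prop :=
  letI : Algebra wK.residueField wL.residueField := (residueMap wK wL e he hcomp).toAlgebra
  Algebra.IsSeparable wK.residueField wL.residueField

/-- A `K`-algebra automorphism of `L` (necessarily preserving the valuation, which is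
recorded in the hypothesis `hGal`) restricts to a ring homomorphism of the valuation
ring `O_L`.  This is the Galois action on `O_L`. -/
def galRes (wL : CompleteDiscreteValuation L)
    (hGal : ∀ (σ : L ≃ₐ[K] L) (x : L), wL.v (σ x) = wL.v x) (σ : L ≃ₐ[K] L) :
    wL.integers →+* wL.integers where
  toFun x := ⟨σ x, by rw [mem_integers_iff, hGal]; exact x.2⟩
  map_one' := Subtype.ext (by simp)
  map_mul' x y := Subtype.ext (by simp)
  map_zero' := Subtype.ext (by simp)
  map_add' x y := Subtype.ext (by simp)

/-- The statement that the action of the Galois group of `L/K` on `O_L/m_L^{s+1}`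
is faithful: every nontrivial automorphism moves some integer of `L` by an element
of valuation at most `s`. -/
def FaithfulOnQuotient (K : Type*) [Field K] {L : Type*} [Field L] [Algebra K L]
    (wL : CompleteDiscreteValuation L) (s : ℕ) : Prop :=
  ∀ σ : L ≃ₐ[K] L, σ ≠ 1 → ∃ x : L, 0 ≤ wL.v x ∧ wL.v (σ x - x) ≤ ((s : ℤ) : WithTop ℤ)

/-- `s` is the ramification break (lower ramification jump) of `L/K`: the smallest
nonnegative integer such that the induced action of `Gal(L/K)` on `O_L/m_L^{s+1}`
is faithful. -/
def IsRamificationBreak (K : Type*) [Field K] {L : Type*} [Field L] [Algebra K L]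
    (wL : CompleteDiscreteValuation L) (s : ℕ) : Prop :=
  FaithfulOnQuotient K wL s ∧ ∀ t : ℕ, t < s → ¬ FaithfulOnQuotient K wL t

end Extension

end CompleteDiscreteValuation

open CompleteDiscreteValuation

namespace CompleteDiscreteValuation

variable {K : Type*} [Field K] (w : CompleteDiscreteValuation K)

lemma v_ne_top {x : K} (hx : x ≠ 0) : w.v x ≠ ⊤ :=
  fun h => hx ((w.eq_top_iff x).1 h)

lemma exists_v_coe {x : K} (hx : x ≠ 0) : ∃ m : ℤ, w.v x = (m : WithTop ℤ) := by
  cases h : w.v x with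
  | top => exact absurd h (w.v_ne_top hx)
  | coe m => exact ⟨m, rfl⟩

lemma v_sub_ge (x y : K) : min (w.v x) (w.v y) ≤ w.v (x - y) := by
  rw [sub_eq_add_neg]
  have := w.min_le_add x (-y)
  rwa [w.v_neg] at this

lemma v_sum_ge {ι : Type*} (S : Finset ι) (g : ι → K) (t : WithTop ℤ)
    (h : ∀ i ∈ S, t ≤ w.v (g i)) : t ≤ w.v (∑ i ∈ S, g i) := by
  classical
  induction S using Finset.cons_induction with
  | empty => simp [w.v_zero]
  | cons j S hj ih =>
      rw [Finset.sum_cons]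
      refine le_trans (le_min (h j (Finset.mem_cons_self j S)) ?_) (w.min_le_add _ _)
      exact ih fun i hi => h i (Finset.mem_cons_of_mem hi)

lemma v_add_eq_left {x y : K} (h : w.v x < w.v y) : w.v (x + y) = w.v x := by
  have h1 : w.v x ≤ w.v (x + y) := le_trans (by simp [min_eq_left h.le]) (w.min_le_add x y)
  refine le_antisymm ?_ h1
  by_contra hc
  push_neg at hc
  have h2 : min (w.v (x + y)) (w.v y) ≤ w.v ((x + y) - y) := w.v_sub_ge _ _
  rw [add_sub_cancel_right] at h2
  exact absurd (lt_of_lt_of_le (lt_min hc h) h2) (lt_irrefl _)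

lemma v_sub_eq_left {x y : K} (h : w.v x < w.v y) : w.v (x - y) = w.v x := by
  rw [sub_eq_add_neg]
  exact w.v_add_eq_left (by rwa [w.v_neg])

lemma v_pow_coe {x : K} {m : ℤ} (h : w.v x = (m : WithTop ℤ)) (n : ℕ) :
    w.v (x ^ n) = (((n : ℤ) * m : ℤ) : WithTop ℤ) := by
  induction n with
  | zero => simpa using w.map_one
  | succ n ih =>
      rw [pow_succ, w.map_mul, ih, h]
      rw [← WithTop.coe_add]
      congr 1
      push_cast
      ring

lemma v_natCast_nonneg (n : ℕ) : 0 ≤ w.v (n : K) := by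
  induction n with
  | zero => simp [w.v_zero]
  | succ n ih =>
      push_cast
      refine le_trans (le_min ih (le_of_eq w.map_one.symm)) (w.min_le_add _ _)

lemma v_eq_zero_of_pow_eq_self {p : ℕ} (hp2 : 2 ≤ p) {x : K} (hx : x ≠ 0)
    (h : x ^ p = x) : w.v x = 0 := by
  obtain ⟨m, hm⟩ := w.exists_v_coe hx
  have h2 := w.v_pow_coe hm p
  rw [h, hm] at h2
  have h3 : (p : ℤ) * m = m := by exact_mod_cast h2.symm
  have h4 : ((p : ℤ) - 1) * m = 0 := by linarith
  rcases mul_eq_zero.mp h4 with h5 | h5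
  · exfalso
    have : (2 : ℤ) ≤ p := by exact_mod_cast hp2
    linarith
  · rw [hm, h5]; rfl

lemma v_inv_eq_zero {u : K} (h : w.v u = 0) : w.v u⁻¹ = 0 := by
  have hu : u ≠ 0 := by
    intro h0; rw [h0, w.v_zero] at h; exact (by simp : (⊤ : WithTop ℤ) ≠ 0) h
  have := w.map_mul u u⁻¹
  rw [mul_inv_cancel₀ hu, w.map_one, h, zero_add] at this
  exact this.symm

lemma v_div_unit (x : K) {u : K} (h : w.v u = 0) : w.v (x / u) = w.v x := by
  rw [div_eq_mul_inv, w.map_mul, w.v_inv_eq_zero h, add_zero]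

lemma coe_lt_iff_add_one_le {m : ℤ} {t : WithTop ℤ} (h : (m : WithTop ℤ) < t) :
    ((m + 1 : ℤ) : WithTop ℤ) ≤ t := by
  cases t with
  | top => exact le_top
  | coe k =>
      rw [WithTop.coe_le_coe]
      rw [WithTop.coe_lt_coe] at h
      omega

lemma v_sum_eq_of_strict {ι : Type*} (S : Finset ι) (g : ι → K) {j : ι} (hj : j ∈ S)
    (h : ∀ i ∈ S, i ≠ j → w.v (g j) < w.v (g i)) :
    w.v (∑ i ∈ S, g i) = w.v (g j) := by
  classical
  by_cases hS : S = {j}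
  · simp [hS]
  · have hex : ∃ i ∈ S, i ≠ j := by
      by_contra hc
      push_neg at hc
      exact hS (Finset.eq_singleton_iff_unique_mem.mpr ⟨hj, hc⟩)
    obtain ⟨i0, hi0S, hi0⟩ := hex
    have hlt : w.v (g j) < ⊤ := lt_of_lt_of_le (h i0 hi0S hi0) le_top
    obtain ⟨m, hm⟩ : ∃ m : ℤ, w.v (g j) = (m : WithTop ℤ) := by
      cases h' : w.v (g j) with
      | top => rw [h'] at hlt; exact absurd hlt (lt_irrefl _)
      | coe m => exact ⟨m, rfl⟩
    have hge : (m : WithTop ℤ) ≤ w.v (∑ i ∈ S, g i) := by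
      refine w.v_sum_ge S g _ fun i hi => ?_
      by_cases hij : i = j
      · rw [hij, hm]
      · exact le_of_lt (hm ▸ h i hi hij)
    have hrest : ((m + 1 : ℤ) : WithTop ℤ) ≤ w.v (∑ i ∈ S.erase j, g i) := by
      refine w.v_sum_ge _ g _ fun i hi => ?_
      exact coe_lt_iff_add_one_le
        (hm ▸ h i (Finset.mem_of_mem_erase hi) (Finset.ne_of_mem_erase hi))
    rw [hm]
    by_contra hne
    have hlt2 : (m : WithTop ℤ) < w.v (∑ i ∈ S, g i) := lt_of_le_of_ne hge (Ne.symm hne)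
    have hsum : g j = (∑ i ∈ S, g i) - (∑ i ∈ S.erase j, g i) := by
      rw [eq_sub_iff_add_eq, Finset.add_sum_erase S g hj]
    have : ((m + 1 : ℤ) : WithTop ℤ) ≤ w.v (g j) := by
      rw [hsum]
      exact le_trans (le_min (coe_lt_iff_add_one_le hlt2) hrest) (w.v_sub_ge _ _)
    rw [hm, WithTop.coe_le_coe] at this
    omega

/-- `Bnd N P x` : whenever `v x` is finite with value `m`, we have `N ≤ P * m`. -/
def Bnd (N P : ℤ) (x : K) : Prop :=
  ∀ m : ℤ, w.v x = (m : WithTop ℤ) → N ≤ P * m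

lemma bnd_zero (N P : ℤ) : w.Bnd N P 0 := by
  intro m hm
  rw [w.v_zero] at hm
  exact absurd hm.symm (WithTop.coe_ne_top)

lemma bnd_sum {ι : Type*} (S : Finset ι) (g : ι → K) {N P : ℤ} (hP : 0 ≤ P)
    (h : ∀ i ∈ S, w.Bnd N P (g i)) : w.Bnd N P (∑ i ∈ S, g i) := by
  classical
  intro m hm
  set T := S.filter (fun i => g i ≠ 0) with hT
  by_cases hTe : T = ∅
  · have : ∑ i ∈ S, g i = 0 := by
      refine Finset.sum_eq_zero fun i hi => ?_
      by_contra hgi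
      exact (Finset.notMem_empty i) (hTe ▸ (Finset.mem_filter.mpr ⟨hi, hgi⟩))
    rw [this, w.v_zero] at hm
    exact absurd hm.symm (WithTop.coe_ne_top)
  · obtain ⟨j, hjT, hjmin⟩ := Finset.exists_min_image T (fun i => w.v (g i))
      (Finset.nonempty_of_ne_empty hTe)
    have hgj : g j ≠ 0 := (Finset.mem_filter.mp hjT).2
    obtain ⟨mj, hmj⟩ := w.exists_v_coe hgj
    have hall : ∀ i ∈ S, (mj : WithTop ℤ) ≤ w.v (g i) := by
      intro i hi
      by_cases hgi : g i = 0
      · rw [hgi, w.v_zero]; exact le_top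
      · exact hmj ▸ hjmin i (Finset.mem_filter.mpr ⟨hi, hgi⟩)
    have := w.v_sum_ge S g _ hall
    rw [hm, WithTop.coe_le_coe] at this
    calc N ≤ P * mj := h j (Finset.mem_filter.mp hjT).1 mj hmj
      _ ≤ P * m := mul_le_mul_of_nonneg_left this hP

lemma bnd_mul_left {N P : ℤ} (hP : 0 ≤ P) {u x : K} (hu : 0 ≤ w.v u)
    (hx : w.Bnd N P x) : w.Bnd N P (u * x) := by
  intro m hm
  rw [w.map_mul] at hm
  by_cases hx0 : x = 0
  · rw [hx0, w.v_zero] at hm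
    simp at hm
  · obtain ⟨m0, hm0⟩ := w.exists_v_coe hx0
    by_cases hu0 : u = 0
    · rw [hu0, w.v_zero] at hm; simp at hm
    · obtain ⟨m1, hm1⟩ := w.exists_v_coe hu0
      rw [hm0, hm1, ← WithTop.coe_add, WithTop.coe_eq_coe] at hm
      have h1 : 0 ≤ m1 := by rw [hm1] at hu; exact_mod_cast hu
      have h2 := hx m0 hm0
      have hm0m : m0 ≤ m := by omega
      calc N ≤ P * m0 := h2
        _ ≤ P * m := mul_le_mul_of_nonneg_left hm0m hP

lemma bnd_neg {N P : ℤ} {x : K} (hx : w.Bnd N P x) : w.Bnd N P (-x) := by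
  intro m hm
  rw [w.v_neg] at hm
  exact hx m hm

lemma bnd_sub {N P : ℤ} (hP : 0 ≤ P) {x y : K} (hx : w.Bnd N P x) (hy : w.Bnd N P y) :
    w.Bnd N P (x - y) := by
  have := w.bnd_sum (Finset.univ : Finset (Fin 2)) (fun i => if i = 0 then x else -y) hP
    (by
      intro i _
      fin_cases i
      · simpa using hx
      · simpa using w.bnd_neg hy)
  simpa [Fin.sum_univ_two, sub_eq_add_neg] using this

lemma bnd_div_unit {N P : ℤ} {x u : K} (hu : w.v u = 0) (hx : w.Bnd N P x) :
    w.Bnd N P (x / u) := by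
  intro m hm
  rw [w.v_div_unit x hu] at hm
  exact hx m hm

lemma bnd_weaken {N N' P : ℤ} (h : N' ≤ N) {x : K} (hx : w.Bnd N P x) : w.Bnd N' P x :=
  fun m hm => le_trans h (hx m hm)

end CompleteDiscreteValuation

lemma withTop_nsmul_coe (n : ℕ) (m : ℤ) :
    n • ((m : WithTop ℤ)) = (((n : ℤ) * m : ℤ) : WithTop ℤ) := by
  induction n with
  | zero => simp
  | succ n ih =>
      rw [succ_nsmul, ih, ← WithTop.coe_add]
      congr 1
      push_cast
      ring

lemma natCast_pow_self' {R : Type*} [CommRing R] (p : ℕ) (hp : p.Prime) [CharP R p]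
    (n : ℕ) : (n : R) ^ p = (n : R) := by
  haveI : Fact p.Prime := ⟨hp⟩
  rw [← Nat.cast_pow]
  have h : (n ^ p : ℕ) ≡ n [MOD p] := by
    have := ZMod.pow_card (n : ZMod p)
    rwa [← Nat.cast_pow, ZMod.natCast_eq_natCast_iff] at this
  exact (CharP.natCast_eq_natCast R p).mpr h

lemma eq_natCast_of_pow_card' {L : Type*} [Field L] {p : ℕ} (hp : p.Prime) [CharP L p]
    {x : L} (hx : x ^ p = x) : ∃ k : ℕ, k < p ∧ x = (k : L) := by
  classical
  have hp2 : 2 ≤ p := hp.two_le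
  set q : Polynomial L := Polynomial.X ^ p - Polynomial.X with hq
  have hdeg : q.degree = p := by
    rw [hq]
    rw [Polynomial.degree_sub_eq_left_of_degree_lt]
    · exact Polynomial.degree_X_pow p
    · rw [Polynomial.degree_X_pow, Polynomial.degree_X]
      exact_mod_cast (by omega : 1 < p)
  have hq0 : q ≠ 0 := by
    intro h
    rw [h, Polynomial.degree_zero] at hdeg
    exact absurd hdeg.symm (by simp)
  have hnatdeg : q.natDegree = p := Polynomial.natDegree_eq_of_degree_eq_some hdeg
  have hroot : ∀ n : ℕ, q.IsRoot (n : L) := by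
    intro n
    simp [hq, Polynomial.IsRoot, natCast_pow_self' p hp n]
  set T : Finset L := (Finset.range p).image (Nat.cast) with hT
  have hinj : Set.InjOn (Nat.cast : ℕ → L) (Finset.range p) := by
    intro a ha b hb hab
    simp only [Finset.coe_range, Set.mem_Iio] at ha hb
    have h1 : a % p = b % p := (CharP.natCast_eq_natCast L p).mp hab
    rwa [Nat.mod_eq_of_lt ha, Nat.mod_eq_of_lt hb] at h1
  have hTcard : T.card = p := by
    rw [hT, Finset.card_image_of_injOn hinj, Finset.card_range]
  have hTsub : T ⊆ q.roots.toFinset := by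
    intro z hz
    rw [hT, Finset.mem_image] at hz
    obtain ⟨n, _, rfl⟩ := hz
    rw [Multiset.mem_toFinset, Polynomial.mem_roots hq0]
    exact hroot n
  have hcard2 : q.roots.toFinset.card ≤ p := by
    calc q.roots.toFinset.card ≤ Multiset.card q.roots := q.roots.toFinset_card_le
      _ ≤ q.natDegree := q.card_roots'
      _ = p := hnatdeg
  have hTeq : T = q.roots.toFinset :=
    Finset.eq_of_subset_of_card_le hTsub (by omega)
  have hxmem : x ∈ q.roots.toFinset := by
    rw [Multiset.mem_toFinset, Polynomial.mem_roots hq0]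
    simp [hq, Polynomial.IsRoot, hx]
  rw [← hTeq, hT, Finset.mem_image] at hxmem
  obtain ⟨k, hk, hkx⟩ := hxmem
  exact ⟨k, Finset.mem_range.mp hk, hkx.symm⟩

lemma sum_swap_lemma' {L : Type*} [CommRing L] (p : ℕ) (hp : 0 < p) (lam c : L) (B : ℕ → L) :
    ∑ i ∈ Finset.range p, B i * ((lam + c) ^ i - lam ^ i)
      = ∑ j ∈ Finset.range (p - 1),
          (∑ i ∈ Finset.Ioc j (p - 1), (i.choose j : L) * c ^ (i - j) * B i) * lam ^ j := by
  have hexp : ∀ i : ℕ, (lam + c) ^ i - lam ^ i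
      = ∑ k ∈ Finset.range i, lam ^ k * c ^ (i - k) * (i.choose k : L) := by
    intro i
    rw [add_pow, Finset.sum_range_succ]
    simp
  calc ∑ i ∈ Finset.range p, B i * ((lam + c) ^ i - lam ^ i)
      = ∑ i ∈ Finset.range p, ∑ k ∈ Finset.range i,
          (i.choose k : L) * c ^ (i - k) * B i * lam ^ k := by
        refine Finset.sum_congr rfl fun i _ => ?_
        rw [hexp, Finset.mul_sum]
        exact Finset.sum_congr rfl fun k _ => by ring
    _ = ∑ k ∈ Finset.range p, ∑ i ∈ Finset.Ioo k p,
          (i.choose k : L) * c ^ (i - k) * B i * lam ^ k := by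
        refine Finset.sum_comm' ?_
        intro i k
        simp only [Finset.mem_range, Finset.mem_Ioo]
        omega
    _ = ∑ k ∈ Finset.range p, (∑ i ∈ Finset.Ioc k (p - 1),
          (i.choose k : L) * c ^ (i - k) * B i) * lam ^ k := by
        refine Finset.sum_congr rfl fun k _ => ?_
        rw [Finset.sum_mul]
        refine Finset.sum_congr ?_ fun i _ => rfl
        ext i
        simp only [Finset.mem_Ioo, Finset.mem_Ioc]
        omega
    _ = ∑ j ∈ Finset.range (p - 1), (∑ i ∈ Finset.Ioc j (p - 1),
          (i.choose j : L) * c ^ (i - j) * B i) * lam ^ j := by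
        have h1 : p = (p - 1) + 1 := by omega
        rw [h1, Finset.sum_range_succ]
        simp only [Nat.add_sub_cancel]
        have hempty : Finset.Ioc (p-1) (p-1) = (∅ : Finset ℕ) := by simp
        rw [hempty]
        simp

/-- The triangular recursion producing the coefficients `b i` from the `a j`. -/
def ASb {K : Type*} [Field K] (p : ℕ) (c : K) (a : ℕ → K) : ℕ → K
  | i =>
    if h : 1 ≤ i ∧ i ≤ p - 1 then
      (a (i - 1) - ∑ i' ∈ (Finset.Ioc i (p - 1)).attach,
          ((i' : ℕ).choose (i - 1) : K) * c ^ ((i' : ℕ) - i + 1) * ASb p c a i') / ((i : K) * c)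
    else 0
  termination_by i => p - i
  decreasing_by
    have := i'.2
    simp only [Finset.mem_Ioc] at this
    omega

lemma ASb_eq_zero {K : Type*} [Field K] (p : ℕ) (c : K) (a : ℕ → K) (i : ℕ)
    (h : ¬(1 ≤ i ∧ i ≤ p - 1)) : ASb p c a i = 0 := by
  rw [ASb, dif_neg h]

lemma ASb_eq {K : Type*} [Field K] (p : ℕ) (c : K) (a : ℕ → K) (i : ℕ)
    (h : 1 ≤ i ∧ i ≤ p - 1) :
    ASb p c a i = (a (i - 1) - ∑ i' ∈ Finset.Ioc i (p - 1),
          (i'.choose (i - 1) : K) * c ^ (i' - i + 1) * ASb p c a i') / ((i : K) * c) := by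
  rw [ASb, dif_pos h, ← Finset.sum_attach (Finset.Ioc i (p-1))
    (fun i' => (i'.choose (i - 1) : K) * c ^ (i' - i + 1) * ASb p c a i')]


/-- Let `L/K` be a totally ramified Galois extension of degree `p` of
complete discrete valued fields of characteristic `p` with ramification break `s`, let
`λ ∈ L` be a root of `X^p - X - f` where `v_K(f) = -s` and `gcd(s, p) = 1`, and let `σ`
be a generator of `Gal(L/K)`.  Then
`(σ - 1) O_L = { Σ_{i ≤ p-2} aᵢ λ^i : aᵢ ∈ K, v_K(aᵢ) ≥ (i+1) s / p }`. -/
theorem sigma_sub_one_integers_eq_artin_schreier_span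
    (p : ℕ) (hp : p.Prime)
    {K L : Type*} [Field K] [Field L] [Algebra K L] [CharP K p]
    (wK : CompleteDiscreteValuation K) (wL : CompleteDiscreteValuation L)
    [IsGalois K L] [FiniteDimensional K L] (hdeg : Module.finrank K L = p)
    (htot : ∀ x : K, wL.v (algebraMap K L x) = p • wK.v x)
    (s : ℕ) (hs : IsRamificationBreak K wL s) (hcop : Nat.Coprime s p)
    (f : K) (hf : wK.v f = ((-(s : ℤ) : ℤ) : WithTop ℤ))
    (lam : L) (hlam : lam ^ p - lam = algebraMap K L f)
    (σ : L ≃ₐ[K] L) (hσ : ∀ τ : L ≃ₐ[K] L, τ ∈ Subgroup.zpowers σ) :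
    ∀ x : L, (∃ y : L, y ∈ wL.integers ∧ x = σ y - y) ↔
      ∃ a : ℕ → K,
        x = ∑ i ∈ Finset.range (p - 1), algebraMap K L (a i) * lam ^ i ∧
        ∀ i < p - 1, ∀ m : ℤ, wK.v (a i) = (m : WithTop ℤ) →
          ((i : ℚ) + 1) * (s : ℚ) / (p : ℚ) ≤ (m : ℚ) := by
  classical
  haveI : Fact p.Prime := ⟨hp⟩
  haveI : CharP L p := charP_of_injective_algebraMap (algebraMap K L).injective p
  haveI : ExpChar L p := ExpChar.prime hp
  have hp2 : 2 ≤ p := hp.two_le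
  have hpz : (0:ℤ) < (p:ℤ) := by exact_mod_cast hp.pos
  have hs1 : 1 ≤ s := by
    rcases Nat.eq_zero_or_pos s with h | h
    · exfalso
      rw [h, Nat.coprime_zero_left] at hcop
      omega
    · exact h
  have hinj := (algebraMap K L).injective
  have hf0 : f ≠ 0 := by
    intro h
    rw [h, wK.v_zero] at hf
    exact WithTop.coe_ne_top hf.symm
  have hvfL : wL.v (algebraMap K L f) = (((p:ℤ) * (-(s:ℤ)) : ℤ) : WithTop ℤ) := by
    rw [htot, hf, withTop_nsmul_coe]
  have hlam0 : lam ≠ 0 := by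
    intro h
    rw [h, zero_pow hp.ne_zero, sub_zero] at hlam
    exact hf0 (hinj (by rw [hlam.symm, map_zero]))
  -- valuation of lam
  have hvlam : wL.v lam = ((-(s:ℤ) : ℤ) : WithTop ℤ) := by
    obtain ⟨m, hm⟩ := wL.exists_v_coe hlam0
    have hmin := wL.v_sub_ge (lam ^ p) lam
    rw [hlam, hvfL, wL.v_pow_coe hm, hm, ← WithTop.coe_min, WithTop.coe_le_coe] at hmin
    have hsz : (1:ℤ) ≤ (s:ℤ) := by exact_mod_cast hs1
    have hm_neg : m < 0 := by
      by_contra hmn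
      push_neg at hmn
      have h1 : 0 ≤ min ((p:ℤ)*m) m := le_min (mul_nonneg (le_of_lt hpz) hmn) hmn
      nlinarith
    have hlt : (p:ℤ) * m < m := by nlinarith
    have heq := wL.v_sub_eq_left (x := lam^p) (y := lam)
      (by rw [wL.v_pow_coe hm, hm]; exact_mod_cast hlt)
    rw [hlam, hvfL, wL.v_pow_coe hm] at heq
    have heq2 : (p:ℤ) * m = (p:ℤ) * (-(s:ℤ)) := by exact_mod_cast heq.symm
    have hmval : m = -(s:ℤ) := mul_left_cancel₀ (ne_of_gt hpz) heq2
    rw [hm, hmval]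
  -- valuation of a term b * lam^i
  have hvE : ∀ (bb : K) (m : ℤ), wK.v bb = (m : WithTop ℤ) → ∀ i : ℕ,
      wL.v (algebraMap K L bb * lam ^ i)
        = (((p:ℤ) * m - (i:ℤ) * (s:ℤ) : ℤ) : WithTop ℤ) := by
    intro bb m hm i
    rw [wL.map_mul, htot, hm, withTop_nsmul_coe, wL.v_pow_coe hvlam, ← WithTop.coe_add]
    congr 1
    ring
  -- distinctness of term valuations
  have hdist : ∀ (i i' : ℕ), i < p → i' < p → ∀ (m m' : ℤ),
      (p:ℤ) * m - (i:ℤ) * (s:ℤ) = (p:ℤ) * m' - (i':ℤ) * (s:ℤ) → i = i' := by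
    intro i i' hi hi' m m' h
    have hdvd : (p:ℤ) ∣ ((i:ℤ) - (i':ℤ)) * (s:ℤ) := ⟨m - m', by linear_combination -h⟩
    have hps : ¬ ((p:ℤ) ∣ (s:ℤ)) := by
      intro hd
      have hd2 : p ∣ s := Int.natCast_dvd_natCast.mp hd
      have h1 : p ∣ Nat.gcd s p := Nat.dvd_gcd hd2 dvd_rfl
      rw [hcop] at h1
      exact (Nat.Prime.one_lt hp).ne' (Nat.dvd_one.mp h1)
    have hpp : Prime ((p:ℤ)) := Nat.prime_iff_prime_int.mp hp
    have hdi : (p:ℤ) ∣ ((i:ℤ) - (i':ℤ)) := by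
      rcases hpp.dvd_mul.mp hdvd with h' | h'
      · exact h'
      · exact absurd h' hps
    obtain ⟨t, ht⟩ := hdi
    have hip : (i:ℤ) < (p:ℤ) := by exact_mod_cast hi
    have hip' : (i':ℤ) < (p:ℤ) := by exact_mod_cast hi'
    have hnn : (0:ℤ) ≤ (i:ℤ) := Int.natCast_nonneg i
    have hnn' : (0:ℤ) ≤ (i':ℤ) := Int.natCast_nonneg i'
    have ht0 : t = 0 := by
      rcases lt_trichotomy t 0 with h' | h' | h'
      · have : (p:ℤ) * t ≤ (p:ℤ) * (-1) := mul_le_mul_of_nonneg_left (by omega) (le_of_lt hpz)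
        linarith
      · exact h'
      · have : (p:ℤ) * 1 ≤ (p:ℤ) * t := mul_le_mul_of_nonneg_left (by omega) (le_of_lt hpz)
        linarith
    have : (i:ℤ) = (i':ℤ) := by rw [ht0, mul_zero] at ht; linarith
    exact_mod_cast this
  -- linear independence of powers of lam
  have hindep : LinearIndependent K (fun i : Fin p => lam ^ (i : ℕ)) := by
    rw [Fintype.linearIndependent_iff]
    intro g hg
    by_contra hc
    push_neg at hc
    obtain ⟨i0, hi0⟩ := hc
    set T : Finset (Fin p) := Finset.univ.filter (fun i => g i ≠ 0) with hTdef
    have hi0T : i0 ∈ T := Finset.mem_filter.mpr ⟨Finset.mem_univ _, hi0⟩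
    obtain ⟨j, hjT, hjmin⟩ := Finset.exists_min_image T
      (fun i => wL.v (algebraMap K L (g i) * lam ^ (i:ℕ))) ⟨i0, hi0T⟩
    have hgj : g j ≠ 0 := (Finset.mem_filter.mp hjT).2
    obtain ⟨mj, hmj⟩ := wK.exists_v_coe hgj
    have hsum : ∑ i ∈ T, algebraMap K L (g i) * lam ^ (i:ℕ) = 0 := by
      have h1 : ∑ i ∈ T, algebraMap K L (g i) * lam ^ (i:ℕ)
          = ∑ i : Fin p, g i • lam ^ (i:ℕ) := by
        rw [hTdef, Finset.sum_filter]
        refine Finset.sum_congr rfl fun i _ => ?_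
        by_cases h : g i = 0 <;> simp [h, Algebra.smul_def]
      rw [h1, hg]
    have hstrict : ∀ i ∈ T, i ≠ j →
        wL.v (algebraMap K L (g j) * lam ^ (j:ℕ)) < wL.v (algebraMap K L (g i) * lam ^ (i:ℕ)) := by
      intro i hiT hij
      have hgi : g i ≠ 0 := (Finset.mem_filter.mp hiT).2
      obtain ⟨mi, hmi⟩ := wK.exists_v_coe hgi
      rw [hvE _ mj hmj, hvE _ mi hmi, WithTop.coe_lt_coe]
      refine lt_of_le_of_ne ?_ ?_
      · have := hjmin i hiT
        rwa [hvE _ mj hmj, hvE _ mi hmi, WithTop.coe_le_coe] at this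
      · intro heq
        exact hij (Fin.ext (hdist (i:ℕ) (j:ℕ) i.isLt j.isLt mi mj
          (by linarith)) : i = j)
    have hfin := wL.v_sum_eq_of_strict T
      (fun i => algebraMap K L (g i) * lam ^ (i:ℕ)) hjT hstrict
    rw [hsum, wL.v_zero, hvE _ mj hmj] at hfin
    exact WithTop.coe_ne_top hfin.symm
  have hcards : Fintype.card (Fin p) = Module.finrank K L := by simp [hdeg]
  set bas : Module.Basis (Fin p) K L := basisOfLinearIndependentOfCardEqFinrank hindep hcards
    with hbasdef
  have hbas_apply : ∀ i : Fin p, bas i = lam ^ (i:ℕ) := fun i => by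
    rw [hbasdef, coe_basisOfLinearIndependentOfCardEqFinrank]
  -- c = σ lam - lam is a nonzero element of the prime field
  set c : L := σ lam - lam with hcdef
  have hclam : σ lam = lam + c := by rw [hcdef]; ring
  have hc0 : c ≠ 0 := by
    intro h0
    have hfix : σ lam = lam := by rw [hcdef] at h0; linear_combination h0
    have hσ1 : σ = 1 := by
      refine AlgEquiv.ext fun z => ?_
      show σ z = z
      conv_lhs => rw [← Module.Basis.sum_repr bas z]
      conv_rhs => rw [← Module.Basis.sum_repr bas z]
      rw [map_sum]
      refine Finset.sum_congr rfl fun i _ => ?_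
      rw [map_smul, hbas_apply, map_pow, hfix]
    have hcard : Fintype.card (L ≃ₐ[K] L) = p := by
      rw [← Nat.card_eq_fintype_card, IsGalois.card_aut_eq_finrank, hdeg]
    obtain ⟨τ, hτ⟩ := Fintype.exists_ne_of_one_lt_card (by omega) (1 : L ≃ₐ[K] L)
    obtain ⟨n, hn⟩ := Subgroup.mem_zpowers_iff.mp (hσ τ)
    rw [hσ1, one_zpow] at hn
    exact hτ hn.symm
  have hcpow : c ^ p = c := by
    have hfσ : (σ lam) ^ p - σ lam = algebraMap K L f := by
      have h1 := congrArg σ hlam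
      rwa [map_sub, map_pow, AlgEquiv.commutes] at h1
    rw [hclam, add_pow_char] at hfσ
    rw [← hlam] at hfσ
    linear_combination hfσ
  obtain ⟨k, hkp, hck⟩ := eq_natCast_of_pow_card' hp hcpow
  set cK : K := (k : K) with hcKdef
  have hmapcK : algebraMap K L cK = c := by rw [hcKdef, map_natCast]; exact hck.symm
  have hcK0 : cK ≠ 0 := by
    intro h
    exact hc0 (by rw [← hmapcK, h, map_zero])
  have hcKpow : cK ^ p = cK := by
    apply hinj
    rw [map_pow, hmapcK, hcpow]
  have hvcK : wK.v cK = 0 := wK.v_eq_zero_of_pow_eq_self hp2 hcK0 hcKpow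
  have hnatne : ∀ n : ℕ, 0 < n → n < p → (n : K) ≠ 0 := by
    intro n hn hnp h
    rw [CharP.cast_eq_zero_iff K p] at h
    have := Nat.le_of_dvd hn h
    omega
  have hvnat : ∀ n : ℕ, 0 < n → n < p → wK.v ((n : K)) = 0 := fun n hn hnp =>
    wK.v_eq_zero_of_pow_eq_self hp2 (hnatne n hn hnp) (natCast_pow_self' p hp n)
  -- the key algebraic identity
  have key : ∀ b : ℕ → K,
      σ (∑ i ∈ Finset.range p, algebraMap K L (b i) * lam ^ i)
        - ∑ i ∈ Finset.range p, algebraMap K L (b i) * lam ^ i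
      = ∑ j ∈ Finset.range (p - 1),
          algebraMap K L (∑ i ∈ Finset.Ioc j (p - 1),
            (i.choose j : K) * cK ^ (i - j) * b i) * lam ^ j := by
    intro b
    have h1 : σ (∑ i ∈ Finset.range p, algebraMap K L (b i) * lam ^ i)
        = ∑ i ∈ Finset.range p, algebraMap K L (b i) * (lam + c) ^ i := by
      rw [map_sum]
      refine Finset.sum_congr rfl fun i _ => ?_
      rw [_root_.map_mul, map_pow, AlgEquiv.commutes, hclam]
    rw [h1, ← Finset.sum_sub_distrib]
    have h2 : ∑ i ∈ Finset.range p,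
        (algebraMap K L (b i) * (lam + c) ^ i - algebraMap K L (b i) * lam ^ i)
        = ∑ i ∈ Finset.range p, algebraMap K L (b i) * ((lam + c) ^ i - lam ^ i) :=
      Finset.sum_congr rfl fun i _ => by ring
    rw [h2, sum_swap_lemma' p hp.pos lam c (fun i => algebraMap K L (b i))]
    refine Finset.sum_congr rfl fun j _ => ?_
    congr 1
    rw [map_sum]
    refine Finset.sum_congr rfl fun i _ => ?_
    rw [_root_.map_mul, _root_.map_mul, map_natCast, map_pow, hmapcK]
  intro x
  constructor
  · -- forward direction
    rintro ⟨y, hyI, rfl⟩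
    set b : ℕ → K := fun i => if h : i < p then bas.repr y ⟨i, h⟩ else 0 with hbdef
    have hyb : y = ∑ i ∈ Finset.range p, algebraMap K L (b i) * lam ^ i := by
      have h1 : ∑ i ∈ Finset.range p, algebraMap K L (b i) * lam ^ i
          = ∑ i : Fin p, bas.repr y i • bas i := by
        rw [← Fin.sum_univ_eq_sum_range (fun i => algebraMap K L (b i) * lam ^ i) p]
        refine Finset.sum_congr rfl fun i _ => ?_
        rw [hbdef]
        simp only [i.isLt, dif_pos, Fin.eta]
        rw [hbas_apply i, Algebra.smul_def]
      rw [h1, Module.Basis.sum_repr bas y]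
    have hbB : ∀ i, i < p → wK.Bnd ((i:ℤ) * (s:ℤ)) p (b i) := by
      intro i hip m hm
      by_contra hlt
      push_neg at hlt
      set F : ℕ → L := fun i' => algebraMap K L (b i') * lam ^ i' with hFdef
      set T : Finset ℕ := (Finset.range p).filter (fun i' => wL.v (F i') < 0) with hTdef
      have hiT : i ∈ T := by
        rw [hTdef, Finset.mem_filter]
        refine ⟨Finset.mem_range.mpr hip, ?_⟩
        rw [hFdef]
        simp only []
        rw [hvE (b i) m hm i]
        exact_mod_cast (show ((p:ℤ)*m - (i:ℤ)*(s:ℤ)) < 0 by linarith)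
      obtain ⟨j, hjT, hjmin⟩ := Finset.exists_min_image T (fun i' => wL.v (F i')) ⟨i, hiT⟩
      have hjlt : wL.v (F j) < 0 := (Finset.mem_filter.mp hjT).2
      have hjp : j < p := Finset.mem_range.mp (Finset.mem_filter.mp hjT).1
      have hbj : b j ≠ 0 := by
        intro h0
        rw [hFdef] at hjlt
        simp only [h0, map_zero, zero_mul] at hjlt
        rw [wL.v_zero] at hjlt
        exact absurd hjlt (by simp)
      obtain ⟨mj, hmj⟩ := wK.exists_v_coe hbj
      have hstrict : ∀ i' ∈ Finset.range p, i' ≠ j → wL.v (F j) < wL.v (F i') := by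
        intro i' hi' hne
        by_cases hb0 : b i' = 0
        · rw [hFdef]
          simp only [hb0, map_zero, zero_mul]
          rw [wL.v_zero, hvE _ mj hmj]
          exact WithTop.coe_lt_top _
        · obtain ⟨mi, hmi⟩ := wK.exists_v_coe hb0
          by_cases hiT' : i' ∈ T
          · refine lt_of_le_of_ne (hjmin i' hiT') ?_
            intro heq
            rw [hFdef] at heq
            simp only [] at heq
            rw [hvE _ mj hmj, hvE _ mi hmi, WithTop.coe_eq_coe] at heq
            exact hne (hdist i' j (Finset.mem_range.mp hi') hjp mi mj heq.symm)
          · have h0 : ¬ (wL.v (F i') < 0) := fun hlt' =>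
              hiT' (by rw [hTdef]; exact Finset.mem_filter.mpr ⟨hi', hlt'⟩)
            push_neg at h0
            exact lt_of_lt_of_le hjlt h0
      have hveq := wL.v_sum_eq_of_strict (Finset.range p) F
        (Finset.mem_range.mpr hjp) hstrict
      rw [mem_integers_iff, hyb] at hyI
      rw [hveq] at hyI
      exact absurd (lt_of_le_of_lt hyI hjlt) (lt_irrefl _)
    refine ⟨fun j => ∑ i ∈ Finset.Ioc j (p - 1), (i.choose j : K) * cK ^ (i - j) * b i,
      ?_, ?_⟩
    · rw [hyb]
      exact key b
    · intro j hj m hm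
      have hBsum : wK.Bnd (((j:ℤ)+1) * (s:ℤ)) p
          (∑ i ∈ Finset.Ioc j (p - 1), (i.choose j : K) * cK ^ (i - j) * b i) := by
        refine wK.bnd_sum _ _ (le_of_lt hpz) fun i hi => ?_
        rw [Finset.mem_Ioc] at hi
        have h1 : 0 ≤ wK.v ((i.choose j : K) * cK ^ (i - j)) := by
          rw [wK.map_mul]
          refine add_nonneg (wK.v_natCast_nonneg _) ?_
          rw [wK.v_pow_coe hvcK]
          simp
        refine wK.bnd_mul_left (le_of_lt hpz) h1 (wK.bnd_weaken ?_ (hbB i (by omega)))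
        have hji : (j:ℤ) + 1 ≤ (i:ℤ) := by exact_mod_cast hi.1
        have hsnn : (0:ℤ) ≤ (s:ℤ) := Int.natCast_nonneg s
        nlinarith
      have h2 := hBsum m hm
      rw [div_le_iff₀ (by positivity : (0:ℚ) < (p:ℚ))]
      have h3 : ((j:ℤ)+1) * (s:ℤ) ≤ m * (p:ℤ) := by linarith
      exact_mod_cast h3
  · -- reverse direction
    rintro ⟨a, hxa, ha⟩
    have ha' : ∀ i, i < p - 1 → wK.Bnd (((i:ℤ)+1) * (s:ℤ)) p (a i) := by
      intro i hi m hm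
      have h1 := ha i hi m hm
      rw [div_le_iff₀ (by positivity : (0:ℚ) < (p:ℚ))] at h1
      have h2 : ((i:ℤ)+1) * (s:ℤ) ≤ m * (p:ℤ) := by exact_mod_cast h1
      linarith
    set b : ℕ → K := ASb p cK a with hbdef
    have hunit : ∀ i : ℕ, 1 ≤ i → i ≤ p - 1 → wK.v ((i:K) * cK) = 0 := by
      intro i h1 h2
      rw [wK.map_mul, hvnat i h1 (by omega), hvcK]
      rfl
    have hbB : ∀ i : ℕ, wK.Bnd ((i:ℤ) * (s:ℤ)) p (b i) := by
      have H : ∀ kk : ℕ, ∀ i : ℕ, p - i ≤ kk → wK.Bnd ((i:ℤ) * (s:ℤ)) p (b i) := by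
        intro kk
        induction kk with
        | zero =>
            intro i hi
            have h0 : ¬(1 ≤ i ∧ i ≤ p - 1) := by omega
            rw [hbdef, ASb_eq_zero p cK a i h0]
            exact wK.bnd_zero _ _
        | succ kk ih =>
            intro i hi
            by_cases hcase : 1 ≤ i ∧ i ≤ p - 1
            · rw [hbdef, ASb_eq p cK a i hcase]
              refine wK.bnd_div_unit (hunit i hcase.1 hcase.2) ?_
              refine wK.bnd_sub (le_of_lt hpz) ?_ ?_
              · have h1 := ha' (i-1) (by omega)
                have hcast : ((i-1:ℕ):ℤ) + 1 = (i:ℤ) := by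
                  have := hcase.1
                  push_cast [Nat.cast_sub this]
                  ring
                rwa [hcast] at h1
              · refine wK.bnd_sum _ _ (le_of_lt hpz) fun i' hi' => ?_
                rw [Finset.mem_Ioc] at hi'
                have h1 : 0 ≤ wK.v ((i'.choose (i-1) : K) * cK ^ (i' - i + 1)) := by
                  rw [wK.map_mul]
                  refine add_nonneg (wK.v_natCast_nonneg _) ?_
                  rw [wK.v_pow_coe hvcK]
                  simp
                refine wK.bnd_mul_left (le_of_lt hpz) h1
                  (wK.bnd_weaken ?_ ((hbdef ▸ ih i' (by omega)) : wK.Bnd _ _ (ASb p cK a i')))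
                have hii' : (i:ℤ) ≤ (i':ℤ) := by exact_mod_cast le_of_lt hi'.1
                have hsnn : (0:ℤ) ≤ (s:ℤ) := Int.natCast_nonneg s
                nlinarith
            · rw [hbdef, ASb_eq_zero p cK a i hcase]
              exact wK.bnd_zero _ _
      exact fun i => H (p - i) i le_rfl
    set y : L := ∑ i ∈ Finset.range p, algebraMap K L (b i) * lam ^ i with hydef
    have hyI : y ∈ wL.integers := by
      rw [mem_integers_iff, hydef]
      refine wL.v_sum_ge _ _ 0 fun i _ => ?_
      by_cases hb0 : b i = 0
      · simp only [hb0, map_zero, zero_mul]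
        rw [wL.v_zero]
        exact le_top
      · obtain ⟨mi, hmi⟩ := wK.exists_v_coe hb0
        rw [hvE _ mi hmi i]
        have h1 := hbB i mi hmi
        exact_mod_cast (show (0:ℤ) ≤ (p:ℤ)*mi - (i:ℤ)*(s:ℤ) by linarith)
    have hcoef : ∀ j, j < p - 1 →
        (∑ i ∈ Finset.Ioc j (p-1), (i.choose j : K) * cK ^ (i - j) * b i) = a j := by
      intro j hj
      have hj1 : 1 ≤ j + 1 := by omega
      have hj2 : j + 1 ≤ p - 1 := by omega
      have hsplit : Finset.Ioc j (p-1) = insert (j+1) (Finset.Ioc (j+1) (p-1)) := by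
        ext t
        simp only [Finset.mem_Ioc, Finset.mem_insert]
        omega
      rw [hsplit, Finset.sum_insert (by simp)]
      have he1 : j + 1 - j = 1 := by omega
      rw [Nat.choose_succ_self_right, he1, pow_one]
      have hbj1 := ASb_eq p cK a (j+1) ⟨hj1, hj2⟩
      rw [show (j+1) - 1 = j by omega] at hbj1
      have hbj1' : ASb p cK a (j+1) = (a j - ∑ i' ∈ Finset.Ioc (j+1) (p-1),
          (i'.choose j : K) * cK ^ (i' - j) * ASb p cK a i') / (((j+1:ℕ):K) * cK) := by
        rw [hbj1]
        congr 2
        refine Finset.sum_congr rfl fun i hi => ?_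
        rw [Finset.mem_Ioc] at hi
        rw [show i - (j+1) + 1 = i - j by omega]
      have hne : ((j+1:ℕ):K) * cK ≠ 0 :=
        mul_ne_zero (hnatne (j+1) (by omega) (by omega)) hcK0
      rw [hbdef, hbj1']
      field_simp
      have hne' : ((j:K) + 1) * cK ≠ 0 := by push_cast at hne; exact hne
      rw [mul_div_cancel_left₀ _ (hnatne (j+1) (by omega) (by omega))]
      ring
    refine ⟨y, hyI, ?_⟩
    rw [hxa, hydef, key b]
    exact (Finset.sum_congr rfl fun j hj => by
      rw [hcoef j (Finset.mem_range.mp hj)]).symm
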